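/- Let (V, ω) be a finite-dimensional symplectic vector space over a field K and M an endomorphism of V that is symplectically normal (MM^{*ω} = M^{*ω}M) and diagonalizable. Then M is symplectically diagonalizable: there exists a symplectic basis (e_1,…,e_n,f_1,…,f_n) of (V, ω) consisting of eigenvectors of M. -/

import Mathlib

open Polynomial

section helpers

variable {K V : Type*} [Field K] [AddCommGroup V] [Module K V]

theorem skew_of_alt (ω : V →ₗ[K] V →ₗ[K] K) (halt : ∀ v : V, ω v v = 0)
    (v w : V) : ω v w = - ω w v := by
  have h := halt (v + w)
  simp only [map_add, LinearMap.add_apply, halt] at h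
  linear_combination h

theorem pow_adj (ω : V →ₗ[K] V →ₗ[K] K) (N N' : Module.End K V)
    (hadj : ∀ v w : V, ω (N v) w = ω v (N' w)) (k : ℕ) :
    ∀ v w : V, ω ((N ^ k) v) w = ω v ((N' ^ k) w) := by
  induction k with
  | zero => simp
  | succ m ih =>
    intro v w
    rw [pow_succ, pow_succ', Module.End.mul_apply, Module.End.mul_apply, ih (N v) w, hadj]

theorem aeval_adj (ω : V →ₗ[K] V →ₗ[K] K) (N N' : Module.End K V)
    (hadj : ∀ v w : V, ω (N v) w = ω v (N' w)) (q : K[X]) (v w : V) :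
    ω ((aeval N q) v) w = ω v ((aeval N' q) w) := by
  induction q using Polynomial.induction_on' with
  | add p q hp hq => simp [map_add, hp, hq]
  | monomial k a =>
    simp only [aeval_monomial, Module.End.mul_apply, Module.algebraMap_end_apply,
      map_smul, LinearMap.smul_apply]
    rw [pow_adj ω N N' hadj k v w]

theorem aeval_comm (M N : Module.End K V) (h : M * N = N * M) (q : K[X]) :
    M * aeval N q = aeval N q * M := by
  induction q using Polynomial.induction_on' with
  | add p q hp hq => simp [map_add, mul_add, add_mul, hp, hq]
  | monomial k a =>
    simp only [aeval_monomial]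
    have hpow : M * N ^ k = N ^ k * M := by
      induction k with
      | zero => simp
      | succ m ih => rw [pow_succ, ← mul_assoc, ih, mul_assoc, h, ← mul_assoc]
    rw [mul_assoc, ← hpow, ← mul_assoc, ← mul_assoc]
    congr 1
    rw [Algebra.commutes]

theorem aeval_eigen (N : Module.End K V) {c : K} {e : V} (h : N e = c • e)
    (q : K[X]) : (aeval N q) e = q.eval c • e := by
  induction q using Polynomial.induction_on' with
  | add p q hp hq => simp [map_add, hp, hq, add_smul]
  | monomial k a =>
    have hpow : ∀ m : ℕ, (N ^ m) e = c ^ m • e := by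
      intro m
      induction m with
      | zero => simp
      | succ l ih => rw [pow_succ', Module.End.mul_apply, ih, map_smul, h, smul_smul, pow_succ]
    simp [aeval_monomial, Module.End.mul_apply, Module.algebraMap_end_apply, hpow,
      eval_monomial, smul_smul, mul_comm]

theorem aeval_mem (N : Module.End K V) (E : Submodule K V)
    (hE : ∀ v ∈ E, N v ∈ E) (q : K[X]) (v : V) (hv : v ∈ E) :
    (aeval N q) v ∈ E := by
  induction q using Polynomial.induction_on' with
  | add p q hp hq => simpa [map_add] using E.add_mem hp hq
  | monomial k a =>
    have hpow : ∀ m : ℕ, (N ^ m) v ∈ E := by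
      intro m
      induction m with
      | zero => simpa
      | succ l ih => rw [pow_succ', Module.End.mul_apply] ; exact hE _ ih
    simpa [aeval_monomial] using E.smul_mem _ (hpow k)

/-- existence of eigenvector in an invariant subspace pointwise killed by a split
squarefree polynomial -/
theorem exists_eigen (N : Module.End K V) (S : Finset K) (E : Submodule K V)
    (hE : ∀ v ∈ E, N v ∈ E)
    (h0 : ∀ v ∈ E, (aeval N (∏ c ∈ S, (X - C c))) v = 0)
    (hne : ∃ v ∈ E, v ≠ 0) :
    ∃ (μ : K) (e : V), e ∈ E ∧ e ≠ 0 ∧ N e = μ • e := by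
  classical
  induction S using Finset.induction_on generalizing E with
  | empty =>
    obtain ⟨v, hv, hvne⟩ := hne
    exact absurd (by simpa using h0 v hv) hvne
  | insert a S hnotmem ih =>
    by_cases hcase : ∃ v ∈ E, (aeval N (∏ c ∈ S, (X - C c))) v ≠ 0
    · obtain ⟨v, hv, hu⟩ := hcase
      set u := (aeval N (∏ c ∈ S, (X - C c))) v with hu_def
      refine ⟨a, u, aeval_mem N E hE _ v hv, hu, ?_⟩
      have h1 : (aeval N (X - C a)) u = 0 := by
        have hp := h0 v hv
        rw [Finset.prod_insert hnotmem, map_mul, Module.End.mul_apply] at hp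
        exact hp
      have : N u - a • u = 0 := by simpa [map_sub, aeval_X, aeval_C, Algebra.algebraMap_eq_smul_one] using h1
      linear_combination (norm := module) this
    · push_neg at hcase
      exact ih E hE hcase hne

end helpers

section main

variable {K : Type*} [Field K]

theorem coe_aeval_restrict {V : Type*} [AddCommGroup V] [Module K V]
    (N : Module.End K V) (E : Submodule K V) (h : ∀ x ∈ E, N x ∈ E)
    (q : K[X]) (x : E) :
    ((aeval (N.restrict h) q) x : V) = (aeval N q) (x : V) := by
  induction q using Polynomial.induction_on' with
  | add p q hp hq => simp [map_add, hp, hq]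
  | monomial k a =>
    have hpow : ∀ m : ℕ, (((N.restrict h) ^ m) x : V) = (N ^ m) (x : V) := by
      intro m
      induction m with
      | zero => simp
      | succ l ih =>
        rw [pow_succ', pow_succ', Module.End.mul_apply, Module.End.mul_apply,
          LinearMap.restrict_coe_apply, ih]
    simp [aeval_monomial, Module.End.mul_apply, Module.algebraMap_end_apply, hpow]

theorem aux (n : ℕ) :
    ∀ {V : Type u_2} [AddCommGroup V] [Module K V] [FiniteDimensional K V]
    (ω : V →ₗ[K] V →ₗ[K] K), (∀ v, ω v v = 0) → (∀ v : V, (∀ w, ω v w = 0) → v = 0) →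
    ∀ (M Mstar : Module.End K V), (∀ v w : V, ω (M v) w = ω v (Mstar w)) →
    M * Mstar = Mstar * M →
    ∀ (S : Finset K), aeval M (∏ c ∈ S, (X - C c)) = 0 →
    Module.finrank K V = 2 * n →
    ∃ e f : Fin n → V,
      (∀ i j, ω (e i) (e j) = 0) ∧ (∀ i j, ω (f i) (f j) = 0) ∧
      (∀ i j, ω (e i) (f j) = if i = j then 1 else 0) ∧
      (∀ i, ∃ c : K, M (e i) = c • e i) ∧ (∀ i, ∃ c : K, M (f i) = c • f i) ∧
      Submodule.span K (Set.range e ∪ Set.range f) = ⊤ := by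
  induction n with
  | zero =>
    intro V _ _ _ ω halt hnd M Mstar hadj hnormal S hS hdim
    refine ⟨Fin.elim0, Fin.elim0, fun i => i.elim0, fun i => i.elim0, fun i => i.elim0,
      fun i => i.elim0, fun i => i.elim0, ?_⟩
    have : Subsingleton V := by
      rw [← Module.finrank_zero_iff (R := K)]
      omega
    exact Subsingleton.elim _ _
  | succ m ih =>
    intro V _ _ _ ω halt hnd M Mstar hadj hnormal S hS hdim
    classical
    have hskew : ∀ v w : V, ω v w = - ω w v := skew_of_alt ω halt
    have hnd' : ∀ v : V, (∀ w, ω w v = 0) → v = 0 := fun v h =>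
      hnd v fun w => by rw [hskew, h w, neg_zero]
    have hadj2 : ∀ v w : V, ω (Mstar v) w = ω v (M w) := by
      intro v w
      rw [hskew (Mstar v) w, ← hadj w v, ← hskew]
    set p : K[X] := ∏ c ∈ S, (X - C c) with hp
    have hSs : aeval Mstar p = 0 := by
      ext w
      refine hnd' _ fun v => ?_
      rw [← aeval_adj ω M Mstar hadj p v w, hS]
      simp
    have : Nontrivial V := by
      apply Module.nontrivial_of_finrank_pos (R := K)
      omega
    -- first eigenvector of M
    obtain ⟨lam, e1, -, he1ne, he1⟩ :=
      exists_eigen M S ⊤ (fun v _ => Submodule.mem_top)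
        (fun v _ => by rw [← hp, hS]; rfl)
        (by obtain ⟨x, hx⟩ := exists_ne (0 : V); exact ⟨x, Submodule.mem_top, hx⟩)
    -- the eigenspace of M for lam
    set E : Submodule K V := LinearMap.ker (M - lam • (1 : Module.End K V)) with hE
    have hmemE : ∀ v : V, v ∈ E ↔ M v = lam • v := by
      intro v
      rw [hE, LinearMap.mem_ker, LinearMap.sub_apply, LinearMap.smul_apply,
        Module.End.one_apply, sub_eq_zero]
    have hEinv : ∀ v ∈ E, Mstar v ∈ E := by
      intro v hv
      rw [hmemE] at hv ⊢
      have : M (Mstar v) = Mstar (M v) := by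
        rw [← Module.End.mul_apply, ← Module.End.mul_apply, hnormal]
      rw [this, hv, map_smul]
    -- joint eigenvector
    obtain ⟨μ, e, heE, hene, heMs⟩ :=
      exists_eigen Mstar S E hEinv (fun v _ => by rw [hSs]; rfl)
        ⟨e1, (hmemE e1).mpr he1, he1ne⟩
    have heM : M e = lam • e := (hmemE e).mp heE
    -- lam and μ are in S
    have hμS : μ ∈ S := by
      have h1 : p.eval μ • e = 0 := by
        rw [← aeval_eigen Mstar heMs p, hSs]; rfl
      have h2 : p.eval μ = 0 := by
        rcases smul_eq_zero.mp h1 with h | h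
        · exact h
        · exact absurd h hene
      rw [hp, eval_prod] at h2
      obtain ⟨c, hcS, hc⟩ := Finset.prod_eq_zero_iff.mp h2
      simp only [eval_sub, eval_X, eval_C, sub_eq_zero] at hc
      rwa [hc]
    have hlamS : lam ∈ S := by
      have h1 : p.eval lam • e = 0 := by
        rw [← aeval_eigen M heM p, hS]; rfl
      have h2 : p.eval lam = 0 := by
        rcases smul_eq_zero.mp h1 with h | h
        · exact h
        · exact absurd h hene
      rw [hp, eval_prod] at h2
      obtain ⟨c, hcS, hc⟩ := Finset.prod_eq_zero_iff.mp h2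
      simp only [eval_sub, eval_X, eval_C, sub_eq_zero] at hc
      rwa [hc]
    -- a vector not ω-orthogonal to e
    obtain ⟨g, hg⟩ : ∃ g, ω e g ≠ 0 := by
      by_contra h
      push_neg at h
      exact hene (hnd e h)
    -- project g to the μ-eigenspace of M
    set q1 : K[X] := ∏ c ∈ S.erase μ, (X - C c) with hq1def
    have hq1 : (X - C μ) * q1 = p := by
      rw [hq1def, hp]; exact Finset.mul_prod_erase S (fun c => X - C c) hμS
    set f1 : V := aeval M q1 g with hf1def
    have hf1 : M f1 = μ • f1 := by
      have h0 : (aeval M (X - C μ)) f1 = 0 := by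
        rw [hf1def, ← Module.End.mul_apply, ← map_mul, hq1, hS]; rfl
      rw [map_sub, aeval_X, aeval_C, LinearMap.sub_apply,
        Module.algebraMap_end_apply, sub_eq_zero] at h0
      exact h0
    have heval1 : q1.eval μ ≠ 0 := by
      rw [hq1def, eval_prod]
      rw [Finset.prod_ne_zero_iff]
      intro c hc
      simp only [eval_sub, eval_X, eval_C, sub_ne_zero]
      exact fun h => (Finset.mem_erase.mp hc).1 h.symm
    have hωef1 : ω e f1 = q1.eval μ * ω e g := by
      rw [hf1def, ← aeval_adj ω Mstar M hadj2 q1 e g, aeval_eigen Mstar heMs q1,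
        map_smul, LinearMap.smul_apply, smul_eq_mul]
    have hωef1ne : ω e f1 ≠ 0 := by
      rw [hωef1]
      exact mul_ne_zero heval1 hg
    -- project f1 to the lam-eigenspace of Mstar
    set r : K[X] := ∏ c ∈ S.erase lam, (X - C c) with hrdef
    have hr : (X - C lam) * r = p := by
      rw [hrdef, hp]; exact Finset.mul_prod_erase S (fun c => X - C c) hlamS
    set f2 : V := aeval Mstar r f1 with hf2def
    have hf2s : Mstar f2 = lam • f2 := by
      have h0 : (aeval Mstar (X - C lam)) f2 = 0 := by
        rw [hf2def, ← Module.End.mul_apply, ← map_mul, hr, hSs]; rfl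
      rw [map_sub, aeval_X, aeval_C, LinearMap.sub_apply,
        Module.algebraMap_end_apply, sub_eq_zero] at h0
      exact h0
    have hf2M : M f2 = μ • f2 := by
      rw [hf2def, ← Module.End.mul_apply, aeval_comm M Mstar hnormal r,
        Module.End.mul_apply, hf1, map_smul]
    have hevalr : r.eval lam ≠ 0 := by
      rw [hrdef, eval_prod, Finset.prod_ne_zero_iff]
      intro c hc
      simp only [eval_sub, eval_X, eval_C, sub_ne_zero]
      exact fun h => (Finset.mem_erase.mp hc).1 h.symm
    have hωef2 : ω e f2 = r.eval lam * ω e f1 := by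
      rw [hf2def, ← aeval_adj ω M Mstar hadj r e f1, aeval_eigen M heM r,
        map_smul, LinearMap.smul_apply, smul_eq_mul]
    have hωef2ne : ω e f2 ≠ 0 := by
      rw [hωef2]; exact mul_ne_zero hevalr hωef1ne
    -- normalize
    set f : V := (ω e f2)⁻¹ • f2 with hfdef
    have hωef : ω e f = 1 := by
      rw [hfdef, map_smul, smul_eq_mul, inv_mul_cancel₀ hωef2ne]
    have hfM : M f = μ • f := by
      rw [hfdef, map_smul, hf2M, smul_comm]
    have hfs : Mstar f = lam • f := by
      rw [hfdef, map_smul, hf2s, smul_comm]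
    have hωfe : ω f e = -1 := by rw [hskew f e, hωef]
    clear_value q1 f1 r f2 f
    -- the symplectic complement of span {e, f}
    set W : Submodule K V := LinearMap.ker (ω e) ⊓ LinearMap.ker (ω f) with hW
    have hmemW : ∀ v : V, v ∈ W ↔ ω e v = 0 ∧ ω f v = 0 := by
      intro v
      rw [hW, Submodule.mem_inf, LinearMap.mem_ker, LinearMap.mem_ker]
    have hWM : ∀ v ∈ W, M v ∈ W := by
      intro v hv
      rw [hmemW] at hv ⊢
      constructor
      · rw [← hadj2 e v, heMs, map_smul, LinearMap.smul_apply, hv.1, smul_zero]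
      · rw [← hadj2 f v, hfs, map_smul, LinearMap.smul_apply, hv.2, smul_zero]
    have hWMs : ∀ v ∈ W, Mstar v ∈ W := by
      intro v hv
      rw [hmemW] at hv ⊢
      constructor
      · rw [← hadj e v, heM, map_smul, LinearMap.smul_apply, hv.1, smul_zero]
      · rw [← hadj f v, hfM, map_smul, LinearMap.smul_apply, hv.2, smul_zero]
    have hdec : ∀ u : V, u - (-(ω f u)) • e - (ω e u) • f ∈ W := by
      intro u
      rw [hmemW]
      constructor
      · rw [map_sub, map_sub, map_smul, map_smul, smul_eq_mul, smul_eq_mul, halt e, hωef]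
        ring
      · rw [map_sub, map_sub, map_smul, map_smul, smul_eq_mul, smul_eq_mul, hωfe, halt f]
        ring
    set ωW := LinearMap.domRestrict₁₂ ω W W with hωWdef
    have hωWapp : ∀ x y : W, ωW x y = ω (x : V) (y : V) := fun x y => rfl
    set MW := M.restrict hWM with hMWdef
    set MsW := Mstar.restrict hWMs with hMsWdef
    have haltW : ∀ x : W, ωW x x = 0 := fun x => halt (x : V)
    have hndW : ∀ x : W, (∀ y : W, ωW x y = 0) → x = 0 := by
      intro x hx
      have hall : ∀ u : V, ω (x : V) u = 0 := by
        intro u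
        have hu : u = (u - (-(ω f u)) • e - (ω e u) • f) + (-(ω f u)) • e + (ω e u) • f := by
          abel
        rw [hu, map_add, map_add, map_smul, map_smul]
        have h1 : ω (x : V) e = 0 := by
          rw [hskew, ((hmemW (x : V)).mp x.2).1, neg_zero]
        have h2 : ω (x : V) f = 0 := by
          rw [hskew, ((hmemW (x : V)).mp x.2).2, neg_zero]
        have h3 : ω (x : V) (u - (-(ω f u)) • e - (ω e u) • f) = 0 := hx ⟨_, hdec u⟩
        rw [h1, h2, h3, smul_zero, smul_zero, add_zero, add_zero]
      exact Subtype.ext (hnd _ hall)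
    have hadjW : ∀ x y : W, ωW (MW x) y = ωW x (MsW y) := by
      intro x y
      rw [hωWapp, hωWapp, hMWdef, hMsWdef, LinearMap.restrict_coe_apply,
        LinearMap.restrict_coe_apply]
      exact hadj _ _
    have hnormalW : MW * MsW = MsW * MW := by
      ext x
      rw [Module.End.mul_apply, Module.End.mul_apply, hMWdef, hMsWdef,
        LinearMap.restrict_coe_apply, LinearMap.restrict_coe_apply,
        LinearMap.restrict_coe_apply, LinearMap.restrict_coe_apply,
        ← Module.End.mul_apply, ← Module.End.mul_apply, hnormal]
    have hSW : aeval MW p = 0 := by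
      ext x
      rw [hMWdef, coe_aeval_restrict M W hWM p x, hS]
      simp
    have hefli : LinearIndependent K ![e, f] := by
      rw [LinearIndependent.pair_iff]
      intro s t hst
      have h1 : ω e (s • e + t • f) = 0 := by rw [hst, map_zero]
      have h2 : ω f (s • e + t • f) = 0 := by rw [hst, map_zero]
      rw [map_add, map_smul, map_smul, smul_eq_mul, smul_eq_mul, halt e, hωef] at h1
      rw [map_add, map_smul, map_smul, smul_eq_mul, smul_eq_mul, hωfe, halt f] at h2
      constructor
      · have : -s = 0 := by linear_combination h2
        linear_combination -this
      · linear_combination h1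
    set P := Submodule.span K (Set.range ![e, f]) with hPdef
    have hfrP : Module.finrank K P = 2 := by
      rw [hPdef, finrank_span_eq_card hefli]
      simp
    have hrange : Set.range ![e, f] = {e, f} := by
      ext x
      simp [Fin.exists_fin_two, eq_comm, or_comm]
    have heP : e ∈ P := Submodule.subset_span (by rw [hrange]; exact Set.mem_insert _ _)
    have hfP : f ∈ P := Submodule.subset_span (by
      rw [hrange]; exact Set.mem_insert_iff.mpr (Or.inr rfl))
    have hsup : P ⊔ W = ⊤ := by
      rw [eq_top_iff]
      rintro u -
      have hu : u = ((-(ω f u)) • e + (ω e u) • f) + (u - (-(ω f u)) • e - (ω e u) • f) := by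
        abel
      rw [hu]
      exact Submodule.add_mem _
        (Submodule.mem_sup_left (Submodule.add_mem _ (Submodule.smul_mem _ _ heP)
          (Submodule.smul_mem _ _ hfP)))
        (Submodule.mem_sup_right (hdec u))
    have hinf : P ⊓ W = ⊥ := by
      rw [eq_bot_iff]
      intro x hx
      obtain ⟨hxP, hxW⟩ := Submodule.mem_inf.mp hx
      rw [hPdef, hrange] at hxP
      obtain ⟨a, b, rfl⟩ := Submodule.mem_span_pair.mp hxP
      rw [hmemW] at hxW
      obtain ⟨h1, h2⟩ := hxW
      rw [map_add, map_smul, map_smul, smul_eq_mul, smul_eq_mul, halt e, hωef] at h1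
      rw [map_add, map_smul, map_smul, smul_eq_mul, smul_eq_mul, hωfe, halt f] at h2
      have ha : a = 0 := by linear_combination -h2
      have hb : b = 0 := by linear_combination h1
      rw [ha, hb, zero_smul, zero_smul, add_zero]
      exact Submodule.zero_mem ⊥
    have hfrW : Module.finrank K W = 2 * m := by
      have h := Submodule.finrank_sup_add_finrank_inf_eq P W
      rw [hsup, hinf, finrank_top, hfrP, hdim, finrank_bot] at h
      omega
    obtain ⟨eW, fW, hee, hff, hef, heig1, heig2, hspanW⟩ :=
      ih ωW haltW hndW MW MsW hadjW hnormalW S hSW hfrW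
    refine ⟨Fin.cons e (fun i => (eW i : V)), Fin.cons f (fun i => (fW i : V)),
      ?_, ?_, ?_, ?_, ?_, ?_⟩
    · intro i j
      induction i using Fin.cases with
      | zero =>
        induction j using Fin.cases with
        | zero => simpa using halt e
        | succ j =>
          simp only [Fin.cons_zero, Fin.cons_succ]
          exact ((hmemW _).mp (eW j).2).1
      | succ i =>
        induction j using Fin.cases with
        | zero =>
          simp only [Fin.cons_zero, Fin.cons_succ]
          rw [hskew, ((hmemW _).mp (eW i).2).1, neg_zero]
        | succ j =>
          simp only [Fin.cons_succ]
          exact hee i j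
    · intro i j
      induction i using Fin.cases with
      | zero =>
        induction j using Fin.cases with
        | zero => simpa using halt f
        | succ j =>
          simp only [Fin.cons_zero, Fin.cons_succ]
          exact ((hmemW _).mp (fW j).2).2
      | succ i =>
        induction j using Fin.cases with
        | zero =>
          simp only [Fin.cons_zero, Fin.cons_succ]
          rw [hskew, ((hmemW _).mp (fW i).2).2, neg_zero]
        | succ j =>
          simp only [Fin.cons_succ]
          exact hff i j
    · intro i j
      induction i using Fin.cases with
      | zero =>
        induction j using Fin.cases with
        | zero => simpa using hωef
        | succ j =>
          simp only [Fin.cons_zero, Fin.cons_succ]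
          rw [if_neg (Fin.succ_ne_zero j).symm]
          exact ((hmemW _).mp (fW j).2).1
      | succ i =>
        induction j using Fin.cases with
        | zero =>
          simp only [Fin.cons_zero, Fin.cons_succ]
          rw [if_neg (Fin.succ_ne_zero i)]
          rw [hskew, ((hmemW _).mp (eW i).2).2, neg_zero]
        | succ j =>
          simp only [Fin.cons_succ, Fin.succ_inj]
          exact hef i j
    · intro i
      induction i using Fin.cases with
      | zero => exact ⟨lam, by simpa using heM⟩
      | succ i =>
        obtain ⟨c, hc⟩ := heig1 i
        refine ⟨c, ?_⟩
        simp only [Fin.cons_succ]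
        have := congrArg (Subtype.val) hc
        rw [hMWdef, LinearMap.restrict_coe_apply] at this
        rw [this]
        rfl
    · intro i
      induction i using Fin.cases with
      | zero => exact ⟨μ, by simpa using hfM⟩
      | succ i =>
        obtain ⟨c, hc⟩ := heig2 i
        refine ⟨c, ?_⟩
        simp only [Fin.cons_succ]
        have := congrArg (Subtype.val) hc
        rw [hMWdef, LinearMap.restrict_coe_apply] at this
        rw [this]
        rfl
    · rw [eq_top_iff]
      rintro u -
      set e' : Fin (m + 1) → V := Fin.cons e (fun i => (eW i : V)) with he'
      set f' : Fin (m + 1) → V := Fin.cons f (fun i => (fW i : V)) with hf'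
      have heT : e ∈ Submodule.span K (Set.range e' ∪ Set.range f') :=
        Submodule.subset_span (Or.inl ⟨0, by rw [he', Fin.cons_zero]⟩)
      have hfT : f ∈ Submodule.span K (Set.range e' ∪ Set.range f') :=
        Submodule.subset_span (Or.inr ⟨0, by rw [hf', Fin.cons_zero]⟩)
      have hWT : W ≤ Submodule.span K (Set.range e' ∪ Set.range f') := by
        rw [← Submodule.map_subtype_top W, ← hspanW, Submodule.map_span]
        apply Submodule.span_le.mpr
        rintro x ⟨y, hy, rfl⟩
        rcases hy with ⟨i, rfl⟩ | ⟨i, rfl⟩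
        · exact Submodule.subset_span (Or.inl ⟨i.succ, by rw [he', Fin.cons_succ]; rfl⟩)
        · exact Submodule.subset_span (Or.inr ⟨i.succ, by rw [hf', Fin.cons_succ]; rfl⟩)
      have hu : u = ((-(ω f u)) • e + (ω e u) • f) + (u - (-(ω f u)) • e - (ω e u) • f) := by
        abel
      rw [hu]
      exact Submodule.add_mem _
        (Submodule.add_mem _ (Submodule.smul_mem _ _ heT) (Submodule.smul_mem _ _ hfT))
        (hWT (hdec u))

end main

theorem stmt_18 {K V : Type*} [Field K] [AddCommGroup V] [Module K V]
    [FiniteDimensional K V] (n : ℕ) (hdim : Module.finrank K V = 2 * n)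
    (ω : V →ₗ[K] V →ₗ[K] K)
    (halt : ∀ v : V, ω v v = 0)
    (hnd : ∀ v : V, (∀ w : V, ω v w = 0) → v = 0)
    (M Mstar : Module.End K V)
    (hadj : ∀ v w : V, ω (M v) w = ω v (Mstar w))
    (hnormal : M * Mstar = Mstar * M)
    (hdiag : ∃ b : Module.Basis (Fin (2 * n)) K V, ∀ i, ∃ c : K, M (b i) = c • b i) :
    ∃ b : Module.Basis (Fin n ⊕ Fin n) K V,
      (∀ i j, ω (b (Sum.inl i)) (b (Sum.inl j)) = 0) ∧
      (∀ i j, ω (b (Sum.inr i)) (b (Sum.inr j)) = 0) ∧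
      (∀ i j, ω (b (Sum.inl i)) (b (Sum.inr j)) = if i = j then 1 else 0) ∧
      (∀ k, ∃ c : K, M (b k) = c • b k) := by
  classical
  obtain ⟨bd, hbd⟩ := hdiag
  choose c hc using hbd
  set S : Finset K := Finset.image c Finset.univ with hSdef
  have hS : aeval M (∏ a ∈ S, (X - C a)) = 0 := by
    apply bd.ext
    intro i
    have hmem : c i ∈ S := Finset.mem_image_of_mem c (Finset.mem_univ i)
    rw [← Finset.prod_erase_mul S (fun a => X - C a) hmem, map_mul,
      Module.End.mul_apply]
    have h0 : (aeval M (X - C (c i))) (bd i) = 0 := by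
      rw [map_sub, aeval_X, aeval_C, LinearMap.sub_apply,
        Module.algebraMap_end_apply, hc i, sub_self]
    rw [h0, map_zero, LinearMap.zero_apply]
  obtain ⟨e, f, hee, hff, hef, heig1, heig2, hspan⟩ :=
    aux n ω halt hnd M Mstar hadj hnormal S hS hdim
  have hrange : Set.range (Sum.elim e f) = Set.range e ∪ Set.range f :=
    Set.Sum.elim_range e f
  have hcard : Fintype.card (Fin n ⊕ Fin n) = Module.finrank K V := by
    rw [hdim]
    simp
    omega
  have hle : ⊤ ≤ Submodule.span K (Set.range (Sum.elim e f)) := by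
    rw [hrange, hspan]
  refine ⟨basisOfTopLeSpanOfCardEqFinrank (Sum.elim e f) hle hcard, ?_, ?_, ?_, ?_⟩
  · intro i j
    rw [coe_basisOfTopLeSpanOfCardEqFinrank]
    exact hee i j
  · intro i j
    rw [coe_basisOfTopLeSpanOfCardEqFinrank]
    exact hff i j
  · intro i j
    rw [coe_basisOfTopLeSpanOfCardEqFinrank]
    exact hef i j
  · intro k
    rw [coe_basisOfTopLeSpanOfCardEqFinrank]
    rcases k with i | i
    · exact heig1 i
    · exact heig2 i
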